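/- For the Gaussian β-characteristic time T*_{KL,β}(ν)^{-1} = max_{ω ∈ Σ_K, ω_{a*}=β} min_{a≠a*} (μ_{a*}-μ_a)²/(2σ²(1/β + 1/ω_a)) and T*_KL(ν) = min_{β ∈ (0,1)} T*_{KL,β}(ν), it holds that T*_{KL,1/2}(ν) ≤ 2 T*_KL(ν). -/

import Mathlib

open scoped BigOperators

/-- Inverse `β`-characteristic time for a Gaussian instance with variance `σ²`,
means `μ` and best arm `0`. -/
noncomputable def betaCharInv {K : ℕ} (σ β : ℝ) (μ : Fin (K + 2) → ℝ) : ℝ :=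
  ⨆ ω : {ω : Fin (K + 2) → ℝ // (∀ a, 0 ≤ ω a) ∧ (∑ a, ω a) = 1 ∧ ω 0 = β},
    ⨅ a : {a : Fin (K + 2) // a ≠ 0},
      (μ 0 - μ a.1) ^ 2 / (2 * σ ^ 2 * (1 / β + 1 / ω.1 a.1))

section Aux

variable {K : ℕ} {σ : ℝ} {μ : Fin (K + 2) → ℝ}

/-- The feasible set at level `β` is nonempty for `0 < β < 1`. -/
lemma feasible_nonempty {β : ℝ} (hβ0 : 0 < β) (hβ1 : β < 1) :
    Nonempty {ω : Fin (K + 2) → ℝ // (∀ a, 0 ≤ ω a) ∧ (∑ a, ω a) = 1 ∧ ω 0 = β} := by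
  refine ⟨⟨fun a => if a = 0 then β else (1 - β) / (K + 1), ?_, ?_, by simp⟩⟩
  · intro a; dsimp only; split
    · exact hβ0.le
    · apply div_nonneg (by linarith) (by positivity)
  · rw [Fin.sum_univ_succ]
    simp only [if_pos rfl, Fin.succ_ne_zero, if_neg, ite_false]
    rw [Finset.sum_const, Finset.card_univ, Fintype.card_fin, nsmul_eq_mul]
    have : ((K + 1 : ℕ) : ℝ) ≠ 0 := by positivity
    push_cast
    field_simp
    ring

lemma term_nonneg {β : ℝ} (hβ0 : 0 < β) {w : ℝ} (hw : 0 ≤ w) (a : Fin (K + 2)) :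
    0 ≤ (μ 0 - μ a) ^ 2 / (2 * σ ^ 2 * (1 / β + 1 / w)) := by
  apply div_nonneg (sq_nonneg _)
  have h1 : 0 ≤ 1 / β := by positivity
  have h2 : 0 ≤ 1 / w := by positivity
  positivity

lemma inner_bddBelow {β : ℝ} (hβ0 : 0 < β)
    (ω : {ω : Fin (K + 2) → ℝ // (∀ a, 0 ≤ ω a) ∧ (∑ a, ω a) = 1 ∧ ω 0 = β}) :
    BddBelow (Set.range fun a : {a : Fin (K + 2) // a ≠ 0} =>
      (μ 0 - μ a.1) ^ 2 / (2 * σ ^ 2 * (1 / β + 1 / ω.1 a.1))) := by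
  refine ⟨0, ?_⟩
  rintro x ⟨a, rfl⟩
  exact term_nonneg hβ0 (ω.2.1 a.1) a.1

lemma sup_bddAbove (hσ : 0 < σ) {β : ℝ} (hβ0 : 0 < β) (hβ1 : β ≤ 1) :
    BddAbove (Set.range fun ω : {ω : Fin (K + 2) → ℝ // (∀ a, 0 ≤ ω a) ∧ (∑ a, ω a) = 1 ∧ ω 0 = β} =>
      ⨅ a : {a : Fin (K + 2) // a ≠ 0},
        (μ 0 - μ a.1) ^ 2 / (2 * σ ^ 2 * (1 / β + 1 / ω.1 a.1))) := by
  refine ⟨(μ 0 - μ 1) ^ 2 / (2 * σ ^ 2), ?_⟩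
  rintro x ⟨ω, rfl⟩
  have h1 : (1 : Fin (K + 2)) ≠ 0 := one_ne_zero
  refine le_trans (ciInf_le (inner_bddBelow hβ0 ω) ⟨1, h1⟩) ?_
  apply div_le_div_of_nonneg_left (sq_nonneg _) (by positivity)
  have hw : 0 ≤ 1 / ω.1 1 := by have := ω.2.1 1; positivity
  have hb : 1 ≤ 1 / β := by rw [le_one_div (by norm_num) hβ0]; simpa using hβ1
  nlinarith [sq_nonneg σ, hσ.le]

lemma betaCharInv_pos (hσ : 0 < σ) (hbest : ∀ a, a ≠ 0 → μ a < μ 0)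
    {β : ℝ} (hβ0 : 0 < β) (hβ1 : β < 1) :
    0 < betaCharInv σ β μ := by
  -- take the explicit feasible point
  set ω0 : Fin (K + 2) → ℝ := fun a => if a = 0 then β else (1 - β) / (K + 1) with hω0
  have hnn : ∀ a, 0 ≤ ω0 a := by
    intro a; dsimp only [ω0]; split
    · exact hβ0.le
    · apply div_nonneg (by linarith) (by positivity)
  have hsum : (∑ a, ω0 a) = 1 := by
    rw [Fin.sum_univ_succ]
    simp only [ω0, if_pos rfl, Fin.succ_ne_zero, ite_false]
    rw [Finset.sum_const, Finset.card_univ, Fintype.card_fin, nsmul_eq_mul]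
    push_cast
    field_simp
    ring
  have h0 : ω0 0 = β := by simp [ω0]
  set Ω : {ω : Fin (K + 2) → ℝ // (∀ a, 0 ≤ ω a) ∧ (∑ a, ω a) = 1 ∧ ω 0 = β} :=
    ⟨ω0, hnn, hsum, h0⟩ with hΩ
  have hposterm : ∀ a : {a : Fin (K + 2) // a ≠ 0},
      0 < (μ 0 - μ a.1) ^ 2 / (2 * σ ^ 2 * (1 / β + 1 / ω0 a.1)) := by
    intro a
    have hμ : 0 < (μ 0 - μ a.1) ^ 2 := by
      have h := hbest a.1 a.2
      have : 0 < μ 0 - μ a.1 := by linarith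
      exact pow_pos this 2
    have hwa : 0 < ω0 a.1 := by
      dsimp only [ω0]; rw [if_neg a.2]; apply div_pos (by linarith) (by positivity)
    have : 0 < 1 / β + 1 / ω0 a.1 := by positivity
    positivity
  have hinf : 0 < ⨅ a : {a : Fin (K + 2) // a ≠ 0},
      (μ 0 - μ a.1) ^ 2 / (2 * σ ^ 2 * (1 / β + 1 / ω0 a.1)) := by
    have hne : Nonempty {a : Fin (K + 2) // a ≠ 0} := ⟨⟨1, one_ne_zero⟩⟩
    obtain ⟨amin, hamin⟩ := Finite.exists_min fun a : {a : Fin (K + 2) // a ≠ 0} =>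
      (μ 0 - μ a.1) ^ 2 / (2 * σ ^ 2 * (1 / β + 1 / ω0 a.1))
    exact lt_of_lt_of_le (hposterm amin) (le_ciInf hamin)
  refine lt_of_lt_of_le hinf ?_
  exact le_ciSup (sup_bddAbove hσ hβ0 hβ1.le) Ω

/-- Core: `betaCharInv σ β μ ≤ 2 * betaCharInv σ (1/2) μ`. -/
lemma betaCharInv_le_two_mul (hσ : 0 < σ) (hbest : ∀ a, a ≠ 0 → μ a < μ 0)
    {β : ℝ} (hβ0 : 0 < β) (hβ1 : β < 1) :
    betaCharInv σ β μ ≤ 2 * betaCharInv σ (1 / 2) μ := by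
  have hne := feasible_nonempty (K := K) hβ0 hβ1
  apply ciSup_le
  intro ω
  -- transformed weights
  set ω' : Fin (K + 2) → ℝ := fun a => if a = 0 then 1 / 2 else ω.1 a / (2 * (1 - β)) with hω'
  have hsumrest : ∑ i : Fin (K + 1), ω.1 i.succ = 1 - β := by
    have := ω.2.2.1
    rw [Fin.sum_univ_succ, ω.2.2.2] at this
    linarith
  have hnn : ∀ a, 0 ≤ ω' a := by
    intro a; dsimp only [ω']; split
    · norm_num
    · apply div_nonneg (ω.2.1 a) (by linarith)
  have hsum : (∑ a, ω' a) = 1 := by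
    rw [Fin.sum_univ_succ]
    simp only [ω', if_pos rfl, Fin.succ_ne_zero, ite_false]
    rw [← Finset.sum_div, hsumrest]
    have hb' : (1:ℝ) - β ≠ 0 := by linarith
    field_simp
    ring
  have h0 : ω' 0 = 1 / 2 := by simp [ω']
  set Ω' : {w : Fin (K + 2) → ℝ // (∀ a, 0 ≤ w a) ∧ (∑ a, w a) = 1 ∧ w 0 = 1 / 2} :=
    ⟨ω', hnn, hsum, h0⟩ with hΩ'
  -- pointwise inequality: term(β, ω, a) ≤ 2 * term(1/2, ω', a)
  have hpt : ∀ a : {a : Fin (K + 2) // a ≠ 0},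
      (μ 0 - μ a.1) ^ 2 / (2 * σ ^ 2 * (1 / β + 1 / ω.1 a.1)) ≤
      2 * ((μ 0 - μ a.1) ^ 2 / (2 * σ ^ 2 * (1 / (1 / 2 : ℝ) + 1 / ω' a.1))) := by
    intro a
    have hwa : 0 ≤ ω.1 a.1 := ω.2.1 a.1
    have hden' : 1 / ω' a.1 = 2 * (1 - β) / ω.1 a.1 := by
      dsimp only [ω']; rw [if_neg a.2, one_div_div]
    rw [hden']
    have hinv : 0 ≤ 1 / ω.1 a.1 := by positivity
    have hfrac : 2 * (1 - β) / ω.1 a.1 ≤ 2 * (1 / ω.1 a.1) := by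
      rcases eq_or_lt_of_le hwa with h | h
      · rw [← h]; simp
      · rw [div_le_iff₀ h]
        have : 2 * (1 / ω.1 a.1) * ω.1 a.1 = 2 := by field_simp
        rw [this]; nlinarith
    have hb : 2 ≤ 1 / β + 1 / ω.1 a.1 + (1 / β - 2 * (1 - β) / ω.1 a.1 + 1 / ω.1 a.1) := by
      have h2b : 2 ≤ 2 / β := by
        rw [le_div_iff₀ hβ0]; nlinarith
      have : 2 / β = 1 / β + 1 / β := by ring
      nlinarith [this]
    -- denominators
    have hA : 0 < 2 * σ ^ 2 * (1 / β + 1 / ω.1 a.1) := by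
      have : 0 < 1 / β := by positivity
      positivity
    have hB : 0 < 2 * σ ^ 2 * (1 / (1 / 2 : ℝ) + 2 * (1 - β) / ω.1 a.1) := by
      have h1 : (1 : ℝ) / (1 / 2) = 2 := by norm_num
      rw [h1]
      have : 0 ≤ 2 * (1 - β) / ω.1 a.1 := by
        apply div_nonneg (by linarith) hwa
      nlinarith [sq_nonneg σ, hσ]
    rw [mul_div_assoc'] at *
    rw [div_le_div_iff₀ hA hB]
    have h1 : (1 : ℝ) / (1 / 2) = 2 := by norm_num
    rw [h1]
    have hkey : 2 + 2 * (1 - β) / ω.1 a.1 ≤ 2 * (1 / β + 1 / ω.1 a.1) := by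
      have h2b : 2 ≤ 2 * (1 / β) := by
        rw [le_mul_iff_one_le_right (by norm_num : (0:ℝ) < 2)]
        rw [le_one_div (by norm_num) hβ0]; linarith
      linarith [hfrac]
    nlinarith [sq_nonneg (μ 0 - μ a.1), sq_nonneg σ, hσ,
      mul_le_mul_of_nonneg_left hkey (mul_nonneg (sq_nonneg (μ 0 - μ a.1)) (by positivity : (0:ℝ) ≤ 2 * σ ^ 2))]
  -- infimum comparison
  haveI hane : Nonempty {a : Fin (K + 2) // a ≠ 0} := ⟨⟨1, one_ne_zero⟩⟩
  have hinf : (⨅ a : {a : Fin (K + 2) // a ≠ 0},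
      (μ 0 - μ a.1) ^ 2 / (2 * σ ^ 2 * (1 / β + 1 / ω.1 a.1))) ≤
      2 * ⨅ a : {a : Fin (K + 2) // a ≠ 0},
        (μ 0 - μ a.1) ^ 2 / (2 * σ ^ 2 * (1 / (1 / 2 : ℝ) + 1 / ω' a.1)) := by
    have hle : (⨅ a : {a : Fin (K + 2) // a ≠ 0},
        (μ 0 - μ a.1) ^ 2 / (2 * σ ^ 2 * (1 / β + 1 / ω.1 a.1))) / 2 ≤
        ⨅ a : {a : Fin (K + 2) // a ≠ 0},
          (μ 0 - μ a.1) ^ 2 / (2 * σ ^ 2 * (1 / (1 / 2 : ℝ) + 1 / ω' a.1)) := by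
      apply le_ciInf
      intro a
      have h1 := ciInf_le (inner_bddBelow (σ := σ) (μ := μ) hβ0 ω) a
      have h2 := hpt a
      linarith
    linarith
  refine le_trans hinf ?_
  have hmono : (⨅ a : {a : Fin (K + 2) // a ≠ 0},
      (μ 0 - μ a.1) ^ 2 / (2 * σ ^ 2 * (1 / (1 / 2 : ℝ) + 1 / ω' a.1))) ≤
      betaCharInv σ (1 / 2) μ := by
    exact le_ciSup (sup_bddAbove hσ (by norm_num) (by norm_num)) Ω'
  linarith

end Aux

/-- `T*_{KL,1/2}(ν) ≤ 2 T*_KL(ν)`, where `T*_KL(ν) = min_{β ∈ (0,1)} T*_{KL,β}(ν)`. -/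
theorem half_beta_char_time_le_twice_min {K : ℕ} (σ : ℝ) (hσ : 0 < σ)
    (μ : Fin (K + 2) → ℝ) (hbest : ∀ a, a ≠ 0 → μ a < μ 0) :
    (betaCharInv σ (1 / 2) μ)⁻¹ ≤
      2 * ⨅ β : Set.Ioo (0 : ℝ) 1, (betaCharInv σ (β : ℝ) μ)⁻¹ := by
  have hC : 0 < betaCharInv σ (1 / 2) μ :=
    betaCharInv_pos hσ hbest (by norm_num) (by norm_num)
  have hne : Nonempty (Set.Ioo (0 : ℝ) 1) := ⟨⟨1 / 2, by norm_num⟩⟩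
  have hstep : ∀ β : Set.Ioo (0 : ℝ) 1,
      (betaCharInv σ (1 / 2) μ)⁻¹ / 2 ≤ (betaCharInv σ (β : ℝ) μ)⁻¹ := by
    intro β
    have hβ0 := β.2.1
    have hβ1 := β.2.2
    have hD : 0 < betaCharInv σ (β : ℝ) μ := betaCharInv_pos hσ hbest hβ0 hβ1
    have hle : betaCharInv σ (β : ℝ) μ ≤ 2 * betaCharInv σ (1 / 2) μ :=
      betaCharInv_le_two_mul hσ hbest hβ0 hβ1
    have := inv_anti₀ hD hle
    rw [mul_inv] at this
    calc (betaCharInv σ (1 / 2) μ)⁻¹ / 2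
        = (2:ℝ)⁻¹ * (betaCharInv σ (1 / 2) μ)⁻¹ := by ring
      _ ≤ _ := this
  have := le_ciInf hstep
  linarith
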